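/- If α <₁ β (that is, α ≤₁ β and α ≠ β), then α is a limit multiple of ρ, i.e. α = ρ·λ for some limit ordinal λ. -/

import Mathlib

open Ordinal Set

/-- `ρ` is additively indecomposable: nonzero and closed under addition. -/
def AddIndec (ρ : Ordinal) : Prop :=
  ρ ≠ 0 ∧ ∀ ξ < ρ, ∀ η < ρ, ξ + η < ρ

/-- `σ` is divisible by `ρ`, i.e. of the form `ρ·ζ`. -/
def DivBy (ρ σ : Ordinal) : Prop := ∃ ζ : Ordinal, σ = ρ * ζ

/-- The function `f_ξ` of the structure `R^ρ`. -/
noncomputable def fApp (ρ ξ α : Ordinal) : Ordinal :=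
  if α % ρ = 0 then α + ξ else ρ * (α / ρ)

/-- A set of ordinals is closed (with respect to `R^ρ`). -/
def RClosed (ρ : Ordinal) (X : Set Ordinal) : Prop :=
  ∀ σ ξ : Ordinal, DivBy ρ σ → ξ < ρ → σ + ξ ∈ X → σ ∈ X

/-- `h` is an embedding of `X` (as a substructure of `R^ρ`) into `R^ρ`. -/
def IsEmbed (ρ : Ordinal) (X : Set Ordinal) (h : Ordinal → Ordinal) : Prop :=
  (∀ α ∈ X, ∀ β ∈ X, α < β → h α < h β) ∧
  (∀ α ∈ X, ∀ β ∈ X, ∀ ξ, ξ < ρ → (fApp ρ ξ α = β ↔ fApp ρ ξ (h α) = h β))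

/-- `Y` is a covering of `Z` (relative to relations `le1`, `le2`). -/
def IsCovering (ρ : Ordinal) (le1 le2 : Ordinal → Ordinal → Prop)
    (Z Y : Set Ordinal) : Prop :=
  ∃ h : Ordinal → Ordinal, IsEmbed ρ Z h ∧
    (∀ σ ∈ Z, ∀ τ ∈ Z, (le1 σ τ → le1 (h σ) (h τ)) ∧ (le2 σ τ → le2 (h σ) (h τ))) ∧
    h '' Z = Y

/-- The `i`-th element of a finite set of ordinals, in increasing order. -/
noncomputable def nth (Y : Finset Ordinal) (i : ℕ) : Ordinal :=
  (Y.sort (· ≤ ·)).getD i 0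

/-- There are cofinally many finite sets `Ỹ` below `α` with property `P`. -/
def Cofinally (α : Ordinal) (P : Finset Ordinal → Prop) : Prop :=
  ∀ α' < α, ∃ Yt : Finset Ordinal, (∀ y ∈ Yt, α' < y ∧ y < α) ∧ P Yt

/-- The defining condition for `α ≤₁ β`. -/
def Le1Def (ρ : Ordinal) (le1 le2 : Ordinal → Ordinal → Prop) (α β : Ordinal) : Prop :=
  α ≤ β ∧
  ∀ X Y : Finset Ordinal, (∀ x ∈ X, x < α) → (∀ y ∈ Y, α ≤ y ∧ y < β) →
    RClosed ρ (↑(X ∪ Y) : Set Ordinal) →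
    ∃ Yt : Finset Ordinal, (∀ y ∈ Yt, y < α) ∧ (∀ x ∈ X, ∀ y ∈ Yt, x < y) ∧
      IsCovering ρ le1 le2 (↑(X ∪ Y) : Set Ordinal) (↑(X ∪ Yt) : Set Ordinal)

/-- The defining condition for `α ≤₂ β`. -/
def Le2Def (ρ : Ordinal) (le1 le2 : Ordinal → Ordinal → Prop) (α β : Ordinal) : Prop :=
  α ≤ β ∧
  (∀ X Y : Finset Ordinal, (∀ x ∈ X, x < α) → (∀ y ∈ Y, y < α) →
    RClosed ρ (↑X : Set Ordinal) → RClosed ρ (↑Y : Set Ordinal) →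
    (∀ x ∈ X, ∀ y ∈ Y, x < y) →
    Cofinally α (fun Yt => IsCovering ρ le1 le2 (↑(X ∪ Y) : Set Ordinal) (↑(X ∪ Yt) : Set Ordinal)) →
    Cofinally β (fun Yt => IsCovering ρ le1 le2 (↑(X ∪ Y) : Set Ordinal) (↑(X ∪ Yt) : Set Ordinal))) ∧
  (∀ X Y : Finset Ordinal, (∀ x ∈ X, x < α) → (∀ y ∈ Y, α ≤ y ∧ y < β) →
    RClosed ρ (↑(X ∪ Y) : Set Ordinal) →
    ∃ Yt : Finset Ordinal, (∀ y ∈ Yt, y < α) ∧ (∀ x ∈ X, ∀ y ∈ Yt, x < y) ∧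
      IsCovering ρ le1 le2 (↑(X ∪ Y) : Set Ordinal) (↑(X ∪ Yt) : Set Ordinal) ∧
      ∀ i : ℕ, i < Y.card → le1 (nth Y i) β → le1 (nth Yt i) α)

/-- `le1`, `le2` satisfy the recursive definitions of `≤₁` and `≤₂` of `R₂^ρ`. -/
def R2System (ρ : Ordinal) (le1 le2 : Ordinal → Ordinal → Prop) : Prop :=
  (∀ α β, le1 α β ↔ Le1Def ρ le1 le2 α β) ∧
  (∀ α β, le2 α β ↔ Le2Def ρ le1 le2 α β)

/-- Isomorphism of two classes of ordinals as substructures of `R₂^ρ`. -/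
def OrdIso (ρ : Ordinal) (le1 le2 : Ordinal → Ordinal → Prop) (A B : Set Ordinal) : Prop :=
  ∃ g : Ordinal → Ordinal, Set.BijOn g A B ∧
    (∀ σ ∈ A, ∀ τ ∈ A, (σ < τ ↔ g σ < g τ)) ∧
    (∀ σ ∈ A, ∀ τ ∈ A, ∀ ξ, ξ < ρ → (fApp ρ ξ σ = τ ↔ fApp ρ ξ (g σ) = g τ)) ∧
    (∀ σ ∈ A, ∀ τ ∈ A, (le1 σ τ ↔ le1 (g σ) (g τ)) ∧ (le2 σ τ ↔ le2 (g σ) (g τ)))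

/-- `κ` is `≤₁`-minimal. -/
def Min1 (le1 : Ordinal → Ordinal → Prop) (κ : Ordinal) : Prop :=
  ∀ ξ < κ, ¬ le1 ξ κ

/-- `(dom, f)` is the increasing enumeration of the class `S` of ordinals:
`dom` is a downward-closed class of indices and `f` restricted to `dom` is the
order isomorphism onto `S`. -/
def Enumerates (S : Set Ordinal) (dom : Ordinal → Prop) (f : Ordinal → Ordinal) : Prop :=
  (∀ a b : Ordinal, dom a → b < a → dom b) ∧
  (∀ a b : Ordinal, dom b → a < b → f a < f b) ∧
  (∀ a : Ordinal, dom a → f a ∈ S) ∧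
  (∀ x ∈ S, ∃ a, dom a ∧ f a = x)

/-- `l` is a limit point of the class `C` of ordinals. -/
def LimPt (C : Set Ordinal) (l : Ordinal) : Prop :=
  l ≠ 0 ∧ ∀ γ < l, ∃ δ ∈ C, γ < δ ∧ δ < l

/-- The class `C` of ordinals is topologically closed. -/
def TopClosed (C : Set Ordinal) : Prop := ∀ l, LimPt C l → l ∈ C

/-- The class `C` of ordinals is an interval. -/
def IsInterval (C : Set Ordinal) : Prop :=
  ∀ σ τ υ : Ordinal, σ ∈ C → υ ∈ C → σ ≤ τ → τ ≤ υ → τ ∈ C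

open Classical in
/-- The closure `J̄_ξ` of the `ξ`-th component of `I_α` with respect to `≤₂`,
given the enumeration `(dom₂, ν)` of the `≤₂`-minimal multiples of `κ_α` in `I_α`. -/
noncomputable def Jbar (le1 : Ordinal → Ordinal → Prop) (κα : Ordinal)
    (dom₂ : Ordinal → Prop) (ν : Ordinal → Ordinal) (ξ : Ordinal) : Set Ordinal :=
  if dom₂ (ξ + 1) then Set.Icc (ν ξ) (ν (ξ + 1))
  else {δ | le1 κα δ} ∩ Set.Ici (ν ξ)

section Aux

private lemma aux_div {ρ : Ordinal} (hρ0 : ρ ≠ 0) {σ ξ τ : Ordinal}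
    (hσ : DivBy ρ σ) (hξ : ξ < ρ) (hτ : σ + ξ = τ) : σ = ρ * (τ / ρ) := by
  obtain ⟨η, rfl⟩ := hσ
  subst hτ
  rw [Ordinal.mul_add_div _ hρ0, Ordinal.div_eq_zero_of_lt hξ, add_zero]

private lemma cover_char {μ α : Ordinal} (Yt : Finset Ordinal)
    (hYlt : ∀ y ∈ Yt, y < α) (hXY : ∀ y ∈ Yt, μ < y)
    (hf : Ordinal → Ordinal)
    (himg : hf '' (↑(({μ} : Finset Ordinal) ∪ ({α} : Finset Ordinal)) : Set Ordinal)
      = (↑(({μ} : Finset Ordinal) ∪ Yt) : Set Ordinal))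
    (hmono : hf μ < hf α) : hf μ = μ ∧ μ < hf α ∧ hf α < α := by
  have hμZ : μ ∈ (↑(({μ} : Finset Ordinal) ∪ ({α} : Finset Ordinal)) : Set Ordinal) := by simp
  have hαZ : α ∈ (↑(({μ} : Finset Ordinal) ∪ ({α} : Finset Ordinal)) : Set Ordinal) := by simp
  have hμimg : hf μ ∈ (↑(({μ} : Finset Ordinal) ∪ Yt) : Set Ordinal) := by
    rw [← himg]; exact Set.mem_image_of_mem hf hμZ
  have hαimg : hf α ∈ (↑(({μ} : Finset Ordinal) ∪ Yt) : Set Ordinal) := by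
    rw [← himg]; exact Set.mem_image_of_mem hf hαZ
  simp only [Finset.coe_union, Finset.coe_singleton, Set.mem_union, Set.mem_singleton_iff,
    Finset.mem_coe] at hμimg hαimg
  have hfμ : hf μ = μ := by
    rcases hμimg with h1 | h1
    · exact h1
    · exfalso
      have hμlt : μ < hf μ := hXY _ h1
      have : μ ∈ hf '' (↑(({μ} : Finset Ordinal) ∪ ({α} : Finset Ordinal)) : Set Ordinal) := by
        rw [himg]; simp
      obtain ⟨z, hz, hzμ⟩ := this
      simp only [Finset.coe_union, Finset.coe_singleton, Set.mem_union,
        Set.mem_singleton_iff] at hz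
      rcases hz with rfl | rfl
      · exact absurd hzμ (ne_of_gt hμlt)
      · exact absurd hmono (not_lt.2 (le_of_lt (hzμ ▸ hμlt)))
  refine ⟨hfμ, ?_, ?_⟩
  · rcases hαimg with h1 | h1
    · exact absurd hmono (by rw [h1, hfμ]; exact lt_irrefl μ)
    · exact hXY _ h1
  · rcases hαimg with h1 | h1
    · exact absurd hmono (by rw [h1, hfμ]; exact lt_irrefl μ)
    · exact hYlt _ h1

end Aux

theorem lt1_limit_multiple
    (ρ : Ordinal) (hρ : AddIndec ρ)
    (le1 le2 : Ordinal → Ordinal → Prop) (hsys : R2System ρ le1 le2)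
    (α β : Ordinal) (h : le1 α β) (hne : α ≠ β) :
    ∃ l : Ordinal, α = ρ * l ∧ Order.IsSuccLimit l := by
  have hρ0 : ρ ≠ 0 := hρ.1
  obtain ⟨hle, hcov⟩ := (hsys.1 α β).mp h
  have hαβ : α < β := lt_of_le_of_ne hle hne
  -- α ≠ 0
  have hα0 : α ≠ 0 := by
    rintro rfl
    obtain ⟨Yt, hYtlt, -, hf, -, -, himg⟩ :=
      hcov ∅ {0} (by simp) (by simpa using hαβ)
        (by
          intro σ ξ hdiv hξ hmem
          simp only [Finset.empty_union, Finset.coe_singleton, Set.mem_singleton_iff] at hmem ⊢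
          have := nonpos_iff_eq_zero.mp (hmem ▸ (le_self_add : σ ≤ σ + ξ))
          exact this)
    have : hf 0 ∈ (↑((∅ : Finset Ordinal) ∪ Yt) : Set Ordinal) := by
      rw [← himg]; exact Set.mem_image_of_mem hf (by simp)
    simp only [Finset.empty_union, Finset.mem_coe] at this
    exact absurd (hYtlt _ this) (zero_le : (0 : Ordinal) ≤ hf 0).not_gt
  have hdm : ρ * (α / ρ) + α % ρ = α := Ordinal.div_add_mod α ρ
  have hεlt : α % ρ < ρ := Ordinal.mod_lt α hρ0
  by_cases hε : α % ρ = 0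
  · -- α is a multiple of ρ
    rw [hε, add_zero] at hdm
    rcases Ordinal.zero_or_succ_or_isSuccLimit (α / ρ) with hz | ⟨η, hη⟩ | hlim
    · exact absurd (by rw [← hdm, hz, mul_zero]) hα0
    · -- successor case: contradiction
      exfalso
      set μ := ρ * η with hμdef
      have hμα : μ < α := by
        rw [← hdm, ← hη, Ordinal.mul_succ]
        exact lt_add_of_pos_right _ (pos_iff_ne_zero.2 hρ0)
      obtain ⟨Yt, hYtlt, hXYt, hf, hemb, -, himg⟩ :=
        hcov {μ} {α} (by simpa using hμα) (by simp [hαβ])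
          (by
            intro σ ξ hdiv hξ hmem
            simp only [Finset.coe_union, Finset.coe_singleton, Set.mem_union,
              Set.mem_singleton_iff] at hmem ⊢
            rcases hmem with h1 | h1
            · left
              rw [aux_div hρ0 hdiv hξ h1, hμdef, Ordinal.mul_div_cancel _ hρ0]
            · right
              rw [aux_div hρ0 hdiv hξ h1, ← hdm, Ordinal.mul_div_cancel _ hρ0])
      have hμZ : μ ∈ (↑(({μ} : Finset Ordinal) ∪ ({α} : Finset Ordinal)) : Set Ordinal) := by simp
      have hαZ : α ∈ (↑(({μ} : Finset Ordinal) ∪ ({α} : Finset Ordinal)) : Set Ordinal) := by simp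
      have hmono : hf μ < hf α := hemb.1 μ hμZ α hαZ hμα
      obtain ⟨hfμ, hμfα, hfαα⟩ := cover_char Yt hYtlt
        (fun y hy => by simpa using hXYt μ (by simp) y hy) hf himg hmono
      set ξ0 := hf α - μ with hξ0def
      have hfαeq : μ + ξ0 = hf α := Ordinal.add_sub_cancel_of_le (le_of_lt hμfα)
      have hξ0ρ : ξ0 < ρ := by
        have hαeq : μ + ρ = α := by
          rw [hμdef, ← Ordinal.mul_succ, hη, hdm]
        have : μ + ξ0 < μ + ρ := by rw [hfαeq, hαeq]; exact hfαα
        exact (add_lt_add_iff_left μ).1 this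
      have hμmod : μ % ρ = 0 := Ordinal.mul_mod ρ η
      have hfappμ : fApp ρ ξ0 μ = μ + ξ0 := by rw [fApp, if_pos hμmod]
      have himage : fApp ρ ξ0 (hf μ) = hf α := by rw [hfμ, hfappμ, hfαeq]
      have := (hemb.2 μ hμZ α hαZ ξ0 hξ0ρ).mpr himage
      rw [hfappμ, hfαeq] at this
      exact absurd this (ne_of_lt hfαα)
    · exact ⟨α / ρ, hdm.symm, hlim⟩
  · -- α not a multiple of ρ : contradiction
    exfalso
    set μ := ρ * (α / ρ) with hμdef
    have hμα : μ < α := by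
      conv_rhs => rw [← hdm]
      exact lt_add_of_pos_right μ (pos_iff_ne_zero.2 hε)
    obtain ⟨Yt, hYtlt, hXYt, hf, hemb, -, himg⟩ :=
      hcov {μ} {α} (by simpa using hμα) (by simp [hαβ])
        (by
          intro σ ξ hdiv hξ hmem
          simp only [Finset.coe_union, Finset.coe_singleton, Set.mem_union,
            Set.mem_singleton_iff] at hmem ⊢
          rcases hmem with h1 | h1
          · left
            rw [aux_div hρ0 hdiv hξ h1, hμdef, Ordinal.mul_div_cancel _ hρ0]
          · left
            rw [aux_div hρ0 hdiv hξ h1])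
    have hμZ : μ ∈ (↑(({μ} : Finset Ordinal) ∪ ({α} : Finset Ordinal)) : Set Ordinal) := by simp
    have hαZ : α ∈ (↑(({μ} : Finset Ordinal) ∪ ({α} : Finset Ordinal)) : Set Ordinal) := by simp
    have hmono : hf μ < hf α := hemb.1 μ hμZ α hαZ hμα
    obtain ⟨hfμ, hμfα, hfαα⟩ := cover_char Yt hYtlt
      (fun y hy => by simpa using hXYt μ (by simp) y hy) hf himg hmono
    have hμmod : μ % ρ = 0 := Ordinal.mul_mod ρ _
    have hfappμ : fApp ρ (α % ρ) μ = α := by rw [fApp, if_pos hμmod]; exact hdm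
    have := (hemb.2 μ hμZ α hαZ (α % ρ) hεlt).mp hfappμ
    rw [hfμ, hfappμ] at this
    exact absurd this.symm (ne_of_lt hfαα)
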